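/- Let (θᵏ)ₖ be a sequence of dual feasible points, let (β°, β₀°, ξ°, ξ*°, ε°) be primal feasible, let θ° ∈ ℝ^{2n+k₁+k₂} satisfy the zero duality gap identity ½‖β°‖² + C(νε° + (1/n)Σᵢ(ξ°ᵢ + ξ*°ᵢ)) = −f(θ°), and assume f(θᵏ) → f(θ°) as k → ∞. Then β(θᵏ) → β° in ℝᵖ. -/

import Mathlib

open Matrix BigOperators

/-- Index type for the dual variables θ = (α, α*, γ, μ). -/
abbrev dIdx (n k₁ k₂ : ℕ) := (Fin n ⊕ Fin n) ⊕ (Fin k₁ ⊕ Fin k₂)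

/-- The stacked matrix M = (X; −X; A; −Γ). -/
noncomputable def Mmat {n p k₁ k₂ : ℕ} (X : Matrix (Fin n) (Fin p) ℝ)
    (A : Matrix (Fin k₁) (Fin p) ℝ) (Γ : Matrix (Fin k₂) (Fin p) ℝ) :
    Matrix (dIdx n k₁ k₂) (Fin p) ℝ :=
  Matrix.fromRows (Matrix.fromRows X (-X)) (Matrix.fromRows A (-Γ))

/-- The linear term l = (y, −y, b, −d). -/
noncomputable def lvec {n k₁ k₂ : ℕ} (y : Fin n → ℝ) (b : Fin k₁ → ℝ)
    (d : Fin k₂ → ℝ) : dIdx n k₁ k₂ → ℝ :=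
  Sum.elim (Sum.elim y (-y)) (Sum.elim b (-d))

/-- The dual objective f(θ) = ½ θᵀ Q̄ θ + lᵀ θ with Q̄ = M Mᵀ. -/
noncomputable def fObj {n p k₁ k₂ : ℕ} (X : Matrix (Fin n) (Fin p) ℝ)
    (A : Matrix (Fin k₁) (Fin p) ℝ) (Γ : Matrix (Fin k₂) (Fin p) ℝ)
    (y : Fin n → ℝ) (b : Fin k₁ → ℝ) (d : Fin k₂ → ℝ)
    (θ : dIdx n k₁ k₂ → ℝ) : ℝ :=
  (1 / 2) * (θ ⬝ᵥ ((Mmat X A Γ * (Mmat X A Γ)ᵀ) *ᵥ θ)) + lvec y b d ⬝ᵥ θ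

/-- β(θ) = −Xᵀ(α − α*) − Aᵀγ + Γᵀμ for θ = (α, α*, γ, μ). -/
noncomputable def betaOf {n p k₁ k₂ : ℕ} (X : Matrix (Fin n) (Fin p) ℝ)
    (A : Matrix (Fin k₁) (Fin p) ℝ) (Γ : Matrix (Fin k₂) (Fin p) ℝ)
    (θ : dIdx n k₁ k₂ → ℝ) : Fin p → ℝ :=
  -(Xᵀ *ᵥ fun i => θ (.inl (.inl i)) - θ (.inl (.inr i)))
    - Aᵀ *ᵥ (fun j => θ (.inr (.inl j))) + Γᵀ *ᵥ (fun j => θ (.inr (.inr j)))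

/-- Dual feasibility of θ = (α, α*, γ, μ). -/
def DualFeasible {n k₁ k₂ : ℕ} (C ν : ℝ) (θ : dIdx n k₁ k₂ → ℝ) : Prop :=
  (∀ i : Fin n, 0 ≤ θ (.inl (.inl i)) ∧ θ (.inl (.inl i)) ≤ C / n) ∧
  (∀ i : Fin n, 0 ≤ θ (.inl (.inr i)) ∧ θ (.inl (.inr i)) ≤ C / n) ∧
  (∑ i : Fin n, (θ (.inl (.inl i)) + θ (.inl (.inr i))) ≤ C * ν) ∧
  (∑ i : Fin n, (θ (.inl (.inl i)) - θ (.inl (.inr i))) = 0) ∧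
  (∀ j : Fin k₁, 0 ≤ θ (.inr (.inl j)))

/-- Primal feasibility of (β, β₀, ξ, ξ*, ε). -/
def PrimalFeasible {n p k₁ k₂ : ℕ} (X : Matrix (Fin n) (Fin p) ℝ)
    (A : Matrix (Fin k₁) (Fin p) ℝ) (Γ : Matrix (Fin k₂) (Fin p) ℝ)
    (y : Fin n → ℝ) (b : Fin k₁ → ℝ) (d : Fin k₂ → ℝ)
    (β : Fin p → ℝ) (β₀ : ℝ) (ξ ξs : Fin n → ℝ) (ε : ℝ) : Prop :=
  (∀ i, X i ⬝ᵥ β + β₀ - y i ≤ ε + ξ i) ∧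
  (∀ i, y i - X i ⬝ᵥ β - β₀ ≤ ε + ξs i) ∧
  (∀ i, 0 ≤ ξ i) ∧ (∀ i, 0 ≤ ξs i) ∧ 0 ≤ ε ∧
  (∀ j, (A *ᵥ β) j ≤ b j) ∧ Γ *ᵥ β = d

lemma aux_transpose_mulVec {n p k₁ k₂ : ℕ} (X : Matrix (Fin n) (Fin p) ℝ)
    (A : Matrix (Fin k₁) (Fin p) ℝ) (Γ : Matrix (Fin k₂) (Fin p) ℝ)
    (θ : dIdx n k₁ k₂ → ℝ) :
    (Mmat X A Γ)ᵀ *ᵥ θ = -betaOf X A Γ θ := by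
  funext j
  simp [Mmat, betaOf, Matrix.mulVec, dotProduct, Fintype.sum_sum_type,
    Matrix.fromRows_apply_inl, Matrix.fromRows_apply_inr, mul_sub, mul_comm, Finset.sum_sub_distrib]
  ring

lemma aux_quad {n p k₁ k₂ : ℕ} (X : Matrix (Fin n) (Fin p) ℝ)
    (A : Matrix (Fin k₁) (Fin p) ℝ) (Γ : Matrix (Fin k₂) (Fin p) ℝ)
    (θ : dIdx n k₁ k₂ → ℝ) :
    θ ⬝ᵥ ((Mmat X A Γ * (Mmat X A Γ)ᵀ) *ᵥ θ)
      = betaOf X A Γ θ ⬝ᵥ betaOf X A Γ θ := by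
  rw [← Matrix.mulVec_mulVec, Matrix.dotProduct_mulVec, Matrix.mulVec_transpose,
    ← Matrix.mulVec_transpose, aux_transpose_mulVec]
  simp

lemma aux_lvec_dot {n k₁ k₂ : ℕ} (y : Fin n → ℝ) (b : Fin k₁ → ℝ) (d : Fin k₂ → ℝ)
    (θ : dIdx n k₁ k₂ → ℝ) :
    lvec y b d ⬝ᵥ θ
      = ∑ i, y i * θ (.inl (.inl i)) - ∑ i, y i * θ (.inl (.inr i))
        + ∑ j, b j * θ (.inr (.inl j)) - ∑ j, d j * θ (.inr (.inr j)) := by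
  simp [lvec, dotProduct, Fintype.sum_sum_type, Finset.sum_sub_distrib]
  ring

lemma aux_tdot {m p : ℕ} (B : Matrix (Fin m) (Fin p) ℝ) (v : Fin m → ℝ) (w : Fin p → ℝ) :
    (Bᵀ *ᵥ v) ⬝ᵥ w = ∑ i, v i * (B *ᵥ w) i := by
  rw [Matrix.mulVec_transpose, ← Matrix.dotProduct_mulVec]; rfl

lemma aux_beta_dot {n p k₁ k₂ : ℕ} (X : Matrix (Fin n) (Fin p) ℝ)
    (A : Matrix (Fin k₁) (Fin p) ℝ) (Γ : Matrix (Fin k₂) (Fin p) ℝ)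
    (θ : dIdx n k₁ k₂ → ℝ) (w : Fin p → ℝ) :
    betaOf X A Γ θ ⬝ᵥ w
      = -∑ i, (θ (.inl (.inl i)) - θ (.inl (.inr i))) * (X *ᵥ w) i
        - ∑ j, θ (.inr (.inl j)) * (A *ᵥ w) j
        + ∑ j, θ (.inr (.inr j)) * (Γ *ᵥ w) j := by
  simp only [betaOf, add_dotProduct, sub_dotProduct,
    neg_dotProduct, aux_tdot]

/-- if (θᵏ) are dual feasible, (β°, β₀°, ξ°, ξ*°, ε°) is primal
feasible, θ° satisfies the zero-duality-gap identity and f(θᵏ) → f(θ°),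
then β(θᵏ) → β°. -/
theorem stmt19 (n p k₁ k₂ : ℕ) (X : Matrix (Fin n) (Fin p) ℝ) (y : Fin n → ℝ)
    (A : Matrix (Fin k₁) (Fin p) ℝ) (Γ : Matrix (Fin k₂) (Fin p) ℝ)
    (b : Fin k₁ → ℝ) (d : Fin k₂ → ℝ) (C ν : ℝ)
    (hC : 0 < C) (hν : ν ∈ Set.Ioc (0 : ℝ) 1)
    (θseq : ℕ → dIdx n k₁ k₂ → ℝ) (hθ : ∀ k, DualFeasible C ν (θseq k))
    (βopt : Fin p → ℝ) (β₀opt : ℝ) (ξopt ξsopt : Fin n → ℝ) (εopt : ℝ)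
    (hprim : PrimalFeasible X A Γ y b d βopt β₀opt ξopt ξsopt εopt)
    (θopt : dIdx n k₁ k₂ → ℝ)
    (hgap : (1 / 2) * (βopt ⬝ᵥ βopt)
        + C * (ν * εopt + (1 / (n : ℝ)) * ∑ i, (ξopt i + ξsopt i)) =
          -(fObj X A Γ y b d θopt))
    (hf : Filter.Tendsto (fun k => fObj X A Γ y b d (θseq k)) Filter.atTop
      (nhds (fObj X A Γ y b d θopt))) :
    Filter.Tendsto (fun k => betaOf X A Γ (θseq k)) Filter.atTop (nhds βopt) := by
  obtain ⟨hp1, hp2, hξ, hξs, hε, hA, hΓ⟩ := hprim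
  set τ : ℝ := C * (ν * εopt + (1 / (n : ℝ)) * ∑ i, (ξopt i + ξsopt i)) with hτ
  -- Key inequality
  have keyT : ∀ θ : dIdx n k₁ k₂ → ℝ, DualFeasible C ν θ →
      0 ≤ lvec y b d ⬝ᵥ θ + betaOf X A Γ θ ⬝ᵥ βopt + τ := by
    intro θ ⟨hα, hαs, hsum, hzero, hγ⟩
    set α : Fin n → ℝ := fun i => θ (.inl (.inl i))
    set αs : Fin n → ℝ := fun i => θ (.inl (.inr i))
    set γ : Fin k₁ → ℝ := fun j => θ (.inr (.inl j))
    set μ : Fin k₂ → ℝ := fun j => θ (.inr (.inr j))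
    have key1 : -(εopt * (C * ν)) ≤
        ∑ i, ((α i - αs i) * (y i - (X *ᵥ βopt) i) + (C / n) * (ξopt i + ξsopt i)) := by
      have hsplit : ∑ i, ((α i - αs i) * (y i - (X *ᵥ βopt) i) + (C / n) * (ξopt i + ξsopt i))
          = ∑ i, (α i * (y i - (X *ᵥ βopt) i - β₀opt + εopt + ξopt i))
            + ∑ i, (αs i * ((X *ᵥ βopt) i + β₀opt - y i + εopt + ξsopt i))
            + ∑ i, ((C / n - α i) * ξopt i + (C / n - αs i) * ξsopt i)
            + β₀opt * ∑ i, (α i - αs i)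
            - εopt * ∑ i, (α i + αs i) := by
        rw [Finset.mul_sum, Finset.mul_sum, ← Finset.sum_add_distrib,
          ← Finset.sum_add_distrib, ← Finset.sum_add_distrib, ← Finset.sum_sub_distrib]
        exact Finset.sum_congr rfl fun i _ => by ring
      have h1 : 0 ≤ ∑ i, (α i * (y i - (X *ᵥ βopt) i - β₀opt + εopt + ξopt i)) := by
        refine Finset.sum_nonneg fun i _ => mul_nonneg (hα i).1 ?_
        have := hp1 i
        have hXv : (X *ᵥ βopt) i = X i ⬝ᵥ βopt := rfl
        linarith [hXv ▸ this]
      have h2 : 0 ≤ ∑ i, (αs i * ((X *ᵥ βopt) i + β₀opt - y i + εopt + ξsopt i)) := by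
        refine Finset.sum_nonneg fun i _ => mul_nonneg (hαs i).1 ?_
        have := hp2 i
        have hXv : (X *ᵥ βopt) i = X i ⬝ᵥ βopt := rfl
        linarith [hXv ▸ this]
      have h3 : 0 ≤ ∑ i, ((C / n - α i) * ξopt i + (C / n - αs i) * ξsopt i) := by
        refine Finset.sum_nonneg fun i _ => add_nonneg
          (mul_nonneg (by linarith [(hα i).2]) (hξ i))
          (mul_nonneg (by linarith [(hαs i).2]) (hξs i))
      have h4 : εopt * ∑ i, (α i + αs i) ≤ εopt * (C * ν) :=
        mul_le_mul_of_nonneg_left hsum hε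
      rw [hsplit, hzero, mul_zero]
      linarith
    have key2 : 0 ≤ ∑ j, γ j * (b j - (A *ᵥ βopt) j) :=
      Finset.sum_nonneg fun j _ => mul_nonneg (hγ j) (by linarith [hA j])
    have expand : lvec y b d ⬝ᵥ θ + betaOf X A Γ θ ⬝ᵥ βopt + τ
        = (∑ i, ((α i - αs i) * (y i - (X *ᵥ βopt) i) + (C / n) * (ξopt i + ξsopt i)))
          + (∑ j, γ j * (b j - (A *ᵥ βopt) j)) + εopt * (C * ν) := by
      rw [aux_lvec_dot, aux_beta_dot, hΓ, hτ]
      simp only [mul_sub, sub_mul, add_mul, mul_add, Finset.sum_add_distrib,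
        Finset.sum_sub_distrib, Finset.mul_sum]
      have c1 : ∑ x, α x * y x = ∑ x, y x * θ (.inl (.inl x)) :=
        Finset.sum_congr rfl fun i _ => mul_comm _ _
      have c2 : ∑ x, αs x * y x = ∑ x, y x * θ (.inl (.inr x)) :=
        Finset.sum_congr rfl fun i _ => mul_comm _ _
      have c3 : ∑ x, γ x * b x = ∑ x, b x * θ (.inr (.inl x)) :=
        Finset.sum_congr rfl fun i _ => mul_comm _ _
      have c4 : ∑ x, θ (.inr (.inr x)) * d x = ∑ x, d x * θ (.inr (.inr x)) :=
        Finset.sum_congr rfl fun i _ => mul_comm _ _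
      have c5 : ∑ x, C * (1 / (n : ℝ) * ξopt x) = ∑ x, C / (n : ℝ) * ξopt x :=
        Finset.sum_congr rfl fun i _ => by ring
      have c6 : ∑ x, C * (1 / (n : ℝ) * ξsopt x) = ∑ x, C / (n : ℝ) * ξsopt x :=
        Finset.sum_congr rfl fun i _ => by ring
      have c7 : ∑ x, α x * (X *ᵥ βopt) x = ∑ x, θ (.inl (.inl x)) * (X *ᵥ βopt) x := rfl
      have c8 : ∑ x, αs x * (X *ᵥ βopt) x = ∑ x, θ (.inl (.inr x)) * (X *ᵥ βopt) x := rfl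
      have c9 : ∑ x, γ x * (A *ᵥ βopt) x = ∑ x, θ (.inr (.inl x)) * (A *ᵥ βopt) x := rfl
      linarith [c1, c2, c3, c4, c5, c6, c7, c8, c9]
    rw [expand]
    linarith
  -- lower bound on the objective gap
  have hfLB : ∀ k, (1 / 2) * ((betaOf X A Γ (θseq k) - βopt) ⬝ᵥ (betaOf X A Γ (θseq k) - βopt))
      ≤ fObj X A Γ y b d (θseq k) - fObj X A Γ y b d θopt := by
    intro k
    have hT := keyT (θseq k) (hθ k)
    have hcomm : betaOf X A Γ (θseq k) ⬝ᵥ βopt = βopt ⬝ᵥ betaOf X A Γ (θseq k) :=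
      dotProduct_comm _ _
    have hq := aux_quad X A Γ (θseq k)
    have hEk : fObj X A Γ y b d (θseq k)
        = 1 / 2 * (betaOf X A Γ (θseq k) ⬝ᵥ betaOf X A Γ (θseq k))
          + lvec y b d ⬝ᵥ θseq k := by
      simp only [fObj, hq]
    have hopt : fObj X A Γ y b d θopt = -(1 / 2 * (βopt ⬝ᵥ βopt) + τ) := by
      linarith [hgap]
    rw [hEk, hopt]
    simp only [sub_dotProduct, dotProduct_sub]
    linarith
  have hdiff : Filter.Tendsto (fun k => fObj X A Γ y b d (θseq k) - fObj X A Γ y b d θopt)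
      Filter.atTop (nhds 0) := by
    simpa using hf.sub_const (fObj X A Γ y b d θopt)
  rw [tendsto_pi_nhds]
  intro j
  have hsq : Filter.Tendsto
      (fun k => (betaOf X A Γ (θseq k) j - βopt j) ^ 2) Filter.atTop (nhds 0) := by
    apply squeeze_zero (fun k => sq_nonneg _)
      (g := fun k => 2 * (fObj X A Γ y b d (θseq k) - fObj X A Γ y b d θopt))
    · intro k
      have h1 := hfLB k
      have h2 : (betaOf X A Γ (θseq k) j - βopt j) ^ 2
          ≤ (betaOf X A Γ (θseq k) - βopt) ⬝ᵥ (betaOf X A Γ (θseq k) - βopt) := by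
        have := Finset.single_le_sum
          (f := fun i => (betaOf X A Γ (θseq k) i - βopt i) * (betaOf X A Γ (θseq k) i - βopt i))
          (fun i _ => mul_self_nonneg _) (Finset.mem_univ j)
        simpa [dotProduct, sq, Pi.sub_apply] using this
      linarith
    · simpa using hdiff.const_mul 2
  have habs : Filter.Tendsto
      (fun k => betaOf X A Γ (θseq k) j - βopt j) Filter.atTop (nhds 0) := by
    rw [tendsto_zero_iff_abs_tendsto_zero]
    have : Filter.Tendsto (fun k => Real.sqrt ((betaOf X A Γ (θseq k) j - βopt j) ^ 2))
        Filter.atTop (nhds (Real.sqrt 0)) := (Real.continuous_sqrt.tendsto 0).comp hsq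
    simpa [Real.sqrt_sq_eq_abs, Function.comp_def] using this
  have := habs.add_const (βopt j)
  simpa using this
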